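/- For every finite sequence x_0, ..., x_{q−1} of positive rational numbers, every sequence of natural numbers m_0, ..., m_{q−1} with each m_j > 1, and all positive rational numbers u, v with u < v, there exists a rational number y with u < y < v such that for every j < q, the rational number y·x_j is not an m_j-th power. -/

import Mathlib

/-- Between any two positive rationals there is a rational `y` such that none of
the `y * x j` is an `m j`-th power. -/
theorem exists_between_not_pow (q : ℕ) (x : Fin q → ℚ) (hx : ∀ j, 0 < x j)
    (m : Fin q → ℕ) (hm : ∀ j, 1 < m j) (u v : ℚ) (hu : 0 < u) (hv : 0 < v)
    (huv : u < v) :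
    ∃ y : ℚ, u < y ∧ y < v ∧ ∀ j, ¬ ∃ w : ℚ, y * x j = w ^ m j := by
  classical
  obtain ⟨p, hpB, hp⟩ := Nat.exists_infinite_primes
    ((Finset.univ.sup fun j => max (x j).num.natAbs (x j).den) + 1)
  haveI : Fact p.Prime := ⟨hp⟩
  have hp1 : 1 < p := hp.one_lt
  have hp0 : (0 : ℚ) < p := by exact_mod_cast hp.pos
  -- valuation of each `x j` is zero
  have hxval : ∀ j, padicValRat p (x j) = 0 := by
    intro j
    have hb : max (x j).num.natAbs (x j).den < p :=
      Nat.lt_of_lt_of_le (Nat.lt_succ_of_le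
        (Finset.le_sup (f := fun j => max (x j).num.natAbs (x j).den)
          (Finset.mem_univ j))) hpB
    have hnum : ¬ (p : ℤ) ∣ (x j).num := by
      rw [Int.natCast_dvd]
      exact Nat.not_dvd_of_pos_of_lt
        (Int.natAbs_pos.mpr (Rat.num_ne_zero.2 (hx j).ne'))
        (lt_of_le_of_lt (le_max_left _ _) hb)
    have hden : ¬ p ∣ (x j).den :=
      Nat.not_dvd_of_pos_of_lt (x j).pos (lt_of_le_of_lt (le_max_right _ _) hb)
    rw [padicValRat_def, padicValInt.eq_zero_of_not_dvd hnum,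
      padicValNat.eq_zero_of_not_dvd hden]
    simp
  -- choose a large `n` coprime to `p`
  obtain ⟨n, hpn, hnbig⟩ : ∃ n : ℕ, ¬ p ∣ n ∧ 2 * (p : ℚ) / (v - u) < n := by
    set K : ℕ := (⌈(2 * p / (v - u) : ℚ)⌉).toNat + 1 with hK
    refine ⟨p * K + 1, ?_, ?_⟩
    · rw [Nat.dvd_add_right (Dvd.intro K rfl)]
      intro h
      have := Nat.le_of_dvd one_pos h
      omega
    · have h1 : (2 * p / (v - u) : ℚ) ≤ (⌈(2 * p / (v - u) : ℚ)⌉ : ℚ) := Int.le_ceil _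
      have h2 : (⌈(2 * p / (v - u) : ℚ)⌉ : ℚ) ≤ ((⌈(2 * p / (v - u) : ℚ)⌉).toNat : ℚ) := by
        exact_mod_cast Int.self_le_toNat _
      have h3 : K ≤ p * K + 1 := le_trans (Nat.le_mul_of_pos_left K hp.pos) (Nat.le_succ _)
      have h4 : (K : ℚ) ≤ (p * K + 1 : ℕ) := by exact_mod_cast h3
      have h5 : ((⌈(2 * p / (v - u) : ℚ)⌉).toNat : ℚ) < K := by
        rw [hK]; push_cast; linarith
      linarith
  have hn0 : (0 : ℚ) < n :=
    lt_trans (div_pos (by positivity) (by linarith)) hnbig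
  -- interval `(n*u/p, n*v/p)` has length > 2
  have hlen : (n : ℚ) * u / p + 2 < (n : ℚ) * v / p := by
    have h1 : 2 * (p : ℚ) < n * (v - u) :=
      (div_lt_iff₀ (by linarith : (0:ℚ) < v - u)).mp hnbig
    rw [div_add' _ _ _ hp0.ne', div_lt_div_iff₀ hp0 hp0]
    nlinarith
  -- choose an integer `c` in the interval, not divisible by `p`
  obtain ⟨c, hpc, hcl, hcr⟩ : ∃ c : ℤ, ¬ (p : ℤ) ∣ c ∧
      (n : ℚ) * u / p < c ∧ (c : ℚ) < (n : ℚ) * v / p := by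
    set a : ℤ := ⌊(n : ℚ) * u / p⌋ + 1 with ha
    have hal : (n : ℚ) * u / p < a := by
      rw [ha]; push_cast; exact Int.lt_floor_add_one _
    have har : (a : ℚ) ≤ (n : ℚ) * u / p + 1 := by
      rw [ha]; push_cast
      have := Int.floor_le ((n : ℚ) * u / p); linarith
    by_cases hd : (p : ℤ) ∣ a
    · refine ⟨a + 1, ?_, ?_, ?_⟩
      · intro h2
        have h3 : (p : ℤ) ∣ 1 := (dvd_add_right hd).mp h2
        have := Int.le_of_dvd one_pos h3
        omega
      · push_cast; linarith
      · push_cast; linarith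
    · exact ⟨a, hd, hal, by linarith⟩
  have hc0 : (0 : ℚ) < (c : ℚ) := lt_trans (by positivity) hcl
  have hcz : c ≠ 0 := by exact_mod_cast hc0.ne'
  -- the witness
  refine ⟨(p : ℚ) * c / n, ?_, ?_, ?_⟩
  · rw [lt_div_iff₀ hn0]
    have h2 : (n : ℚ) * u < c * p := (div_lt_iff₀ hp0).mp hcl
    nlinarith
  · rw [div_lt_iff₀ hn0]
    have h2 : (c : ℚ) * p < n * v := (lt_div_iff₀ hp0).mp hcr
    nlinarith
  · have hy0 : (0 : ℚ) < (p : ℚ) * c / n := by positivity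
    have hyval : padicValRat p ((p : ℚ) * c / n) = 1 := by
      rw [padicValRat.div (by positivity) hn0.ne',
        padicValRat.mul hp0.ne' (by exact_mod_cast hcz),
        padicValRat.self hp1, padicValRat.of_int, padicValRat.of_nat,
        padicValInt.eq_zero_of_not_dvd hpc, padicValNat.eq_zero_of_not_dvd hpn]
      simp
    rintro j ⟨w, hw⟩
    have hprod : (0 : ℚ) < (p : ℚ) * c / n * x j := mul_pos hy0 (hx j)
    have hw0 : w ≠ 0 := by
      rintro rfl
      rw [zero_pow (by have := hm j; omega : m j ≠ 0)] at hw
      exact hprod.ne' (hw ▸ rfl)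
    have h1 : padicValRat p ((p : ℚ) * c / n * x j) = 1 := by
      rw [padicValRat.mul hy0.ne' (hx j).ne', hyval, hxval j]; ring
    rw [hw, padicValRat.pow w] at h1
    have hdvd : (m j : ℤ) ∣ 1 := ⟨padicValRat p w, h1.symm⟩
    have := Int.le_of_dvd one_pos hdvd
    have := hm j
    omega
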